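/- Let G be a torsion-free abelian group, G₀ a pure subgroup of G, and E a countable system of ℤ-linear equations whose constants all lie in G₀. If E is finitely solvable in G, then there exists a torsion-free abelian group H of cardinality at most |G₀| + ℵ₀ together with a pure embedding of G₀ into H such that E has a solution in H. -/

import Mathlib

/-- `H` is a pure subgroup: `nG ∩ H = nH` for every `n : ℕ`. -/
def AddSubgroup.IsPure {G : Type*} [AddCommGroup G] (H : AddSubgroup G) : Prop :=
  ∀ (n : ℕ), ∀ h ∈ H, (∃ g : G, n • g = h) → ∃ h' ∈ H, n • h' = h

/-- A countable system of `ℤ`-linear equations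
`∑_{j < len i} coeff i j • x (var i j) = const i` (for `i < ω`). -/
structure LinearSystem (G : Type*) [AddCommGroup G] where
  len : ℕ → ℕ
  coeff : (i : ℕ) → Fin (len i) → ℤ
  var : (i : ℕ) → Fin (len i) → ℕ
  const : ℕ → G

/-- Every finite subsystem of `E` has a solution in `G`. -/
def LinearSystem.FinitelySolvable {G : Type*} [AddCommGroup G] (E : LinearSystem G) : Prop :=
  ∀ s : Finset ℕ, ∃ x : ℕ → G,
    ∀ i ∈ s, ∑ j : Fin (E.len i), E.coeff i j • x (E.var i j) = E.const i

universe u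

open Filter Cardinal

namespace PureExtAux

variable {K : Type u} [AddCommGroup K]

lemma sum_map_neg {α : Type*} (c : α → ℤ) (v : α → K) (l : List α) :
    ((l.map fun p => (-(c p)) • v p).sum) = -((l.map fun p => (c p) • v p).sum) := by
  induction l with
  | nil => simp
  | cons a t ih =>
      rw [List.map_cons, List.sum_cons, List.map_cons, List.sum_cons, ih, neg_smul, neg_add]

lemma mk_closure_le (T : Set K) : #(AddSubgroup.closure T) ≤ max #(↥T) ℵ₀ := by
  classical
  set φ : List (ℤ × ↥T) → K := fun l => (l.map fun p => p.1 • (p.2 : K)).sum with hφ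
  let R : AddSubgroup K :=
  { carrier := Set.range φ
    zero_mem' := ⟨[], by simp [hφ]⟩
    add_mem' := by
      rintro a b ⟨l₁, rfl⟩ ⟨l₂, rfl⟩
      exact ⟨l₁ ++ l₂, by simp [hφ]⟩
    neg_mem' := by
      rintro a ⟨l, rfl⟩
      refine ⟨l.map fun p => (-p.1, p.2), ?_⟩
      simp only [hφ, List.map_map]
      simpa [Function.comp_def] using sum_map_neg (fun p : ℤ × ↥T => p.1) (fun p => (p.2 : K)) l
  }
  have hT : T ⊆ (R : Set K) := fun t ht => ⟨[(1, ⟨t, ht⟩)], by simp [hφ]⟩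
  have hle : (AddSubgroup.closure T : Set K) ⊆ Set.range φ :=
    fun x hx => (AddSubgroup.closure_le R).mpr hT hx
  have h1 : #(AddSubgroup.closure T) ≤ #(List (ℤ × ↥T)) :=
    (Cardinal.mk_le_mk_of_subset hle).trans Cardinal.mk_range_le
  have h2 : #(ℤ × ↥T) ≤ max #(↥T) ℵ₀ := by
    have e : #(ℤ × ↥T) = ℵ₀ * #(↥T) := by
      rw [Cardinal.mk_prod]; simp
    rw [e]
    refine (Cardinal.mul_le_max _ _).trans ?_
    rw [max_comm ℵ₀ #(↥T), max_assoc, max_self, max_comm]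
  refine h1.trans ((Cardinal.mk_list_le_max _).trans ?_)
  exact max_le (le_max_right _ _) h2

variable [NoZeroSMulDivisors ℤ K]

def pureCl (S : AddSubgroup K) : AddSubgroup K where
  carrier := {k | ∃ n : ℕ, 0 < n ∧ (n : ℤ) • k ∈ S}
  zero_mem' := ⟨1, one_pos, by simpa using S.zero_mem⟩
  add_mem' := by
    rintro a b ⟨n, hn, ha⟩ ⟨m, hm, hb⟩
    refine ⟨n * m, Nat.mul_pos hn hm, ?_⟩
    have e1 : ((n * m : ℕ) : ℤ) • a = (m : ℤ) • ((n : ℤ) • a) := by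
      rw [smul_smul]; exact congrArg (· • a) (by push_cast; ring)
    have e2 : ((n * m : ℕ) : ℤ) • b = (n : ℤ) • ((m : ℤ) • b) := by
      rw [smul_smul]; exact congrArg (· • b) (by push_cast; ring)
    rw [smul_add, e1, e2]
    exact S.add_mem (S.zsmul_mem ha m) (S.zsmul_mem hb n)
  neg_mem' := by
    rintro a ⟨n, hn, ha⟩
    exact ⟨n, hn, by simpa using S.neg_mem ha⟩

lemma mk_pureCl_le (S : AddSubgroup K) : #(pureCl S) ≤ ℵ₀ * #S := by
  have key : ∀ h : pureCl S, ∃ n : ℕ, 0 < n ∧ (n : ℤ) • (h : K) ∈ S := fun h => h.2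
  choose n hn hmem using key
  have hinj : Function.Injective
      (fun h : pureCl S => ((n h, ⟨(n h : ℤ) • (h : K), hmem h⟩) : ℕ × S)) := by
    intro a b hab
    have h1 : n a = n b := congrArg Prod.fst hab
    have h2 : (n a : ℤ) • (a : K) = (n b : ℤ) • (b : K) :=
      congrArg (fun p : ℕ × S => (p.2 : K)) hab
    rw [h1] at h2
    have hc : (n b : ℤ) ≠ 0 := by exact_mod_cast (hn b).ne'
    exact Subtype.ext (smul_right_injective K hc h2)
  calc #(pureCl S) ≤ #(ℕ × S) := Cardinal.mk_le_of_injective hinj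
    _ = ℵ₀ * #S := by simp

lemma nzsd_subtype (S : AddSubgroup K) : NoZeroSMulDivisors ℤ S := by
  constructor
  intro c a h
  have h0 : c • (a : K) = 0 := by
    have := congrArg (Subtype.val) h
    simpa using this
  rcases smul_eq_zero.mp h0 with h | h
  · exact Or.inl h
  · exact Or.inr (Subtype.ext h)

variable (G : Type u) [AddCommGroup G]

def evz : AddSubgroup (ℕ → G) where
  carrier := {f | ∀ᶠ i in (hyperfilter ℕ : Filter ℕ), f i = 0}
  zero_mem' := Eventually.of_forall fun _ => rfl
  add_mem' := by intro a b ha hb; filter_upwards [ha, hb] with i h1 h2; simp [h1, h2]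
  neg_mem' := by intro a ha; filter_upwards [ha] with i h; simp [h]

abbrev UP := (ℕ → G) ⧸ evz G

def pr : (ℕ → G) →+ UP G := QuotientAddGroup.mk' _

lemma pr_surj : Function.Surjective (pr G) := QuotientAddGroup.mk'_surjective _

lemma pr_eq_zero {f : ℕ → G} :
    pr G f = 0 ↔ ∀ᶠ i in (hyperfilter ℕ : Filter ℕ), f i = 0 :=
  QuotientAddGroup.eq_zero_iff f

instance [NoZeroSMulDivisors ℤ G] : NoZeroSMulDivisors ℤ (UP G) := by
  constructor
  intro c a h
  by_cases hc : c = 0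
  · exact Or.inl hc
  right
  obtain ⟨f, rfl⟩ := pr_surj G a
  rw [← map_zsmul] at h
  rw [pr_eq_zero] at h ⊢
  filter_upwards [h] with i hi
  exact (smul_eq_zero.mp hi).resolve_left hc

def diag : G →+ UP G :=
  (pr G).comp (AddMonoidHom.mk' (fun g => Function.const ℕ g) (fun _ _ => rfl))

lemma diag_inj : Function.Injective (diag G) := by
  intro a b h
  have h0 : diag G (a - b) = 0 := by rw [map_sub, h, sub_self]
  have h1 : ∀ᶠ i in (hyperfilter ℕ : Filter ℕ), (Function.const ℕ (a - b)) i = 0 :=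
    (pr_eq_zero G).mp h0
  obtain ⟨i, hi⟩ := h1.exists
  exact sub_eq_zero.mp hi

lemma pure_diag (a : G) (k : UP G) (n : ℕ) (h : n • k = diag G a) :
    ∃ g : G, n • g = a := by
  obtain ⟨f, rfl⟩ := pr_surj G k
  have h0 : pr G (n • f - Function.const ℕ a) = 0 := by
    rw [map_sub, map_nsmul, h]
    exact sub_self _
  obtain ⟨i, hi⟩ := ((pr_eq_zero G).mp h0).exists
  refine ⟨f i, ?_⟩
  have : (n • f) i - a = 0 := hi
  simpa [sub_eq_zero] using this

end PureExtAux

/-- If `G₀` is a pure subgroup of a torsion-free abelian group `G` and `E` is a countable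
system of `ℤ`-linear equations with constants in `G₀` which is finitely solvable in `G`,
then there is a torsion-free group `H` of cardinality at most `|G₀| + ℵ₀` together with a
pure embedding of `G₀` into `H` in which `E` is solvable. -/
theorem exists_small_pure_extension_with_solution
    {G : Type u} [AddCommGroup G] [NoZeroSMulDivisors ℤ G]
    (G₀ : AddSubgroup G) (hG₀ : G₀.IsPure)
    (E : LinearSystem G) (hconst : ∀ i : ℕ, E.const i ∈ G₀)
    (hfs : E.FinitelySolvable) :
    ∃ (H : Type u) (_ : AddCommGroup H), NoZeroSMulDivisors ℤ H ∧
      Cardinal.mk H ≤ Cardinal.mk ↥G₀ + Cardinal.aleph0 ∧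
      ∃ f : ↥G₀ →+ H, Function.Injective f ∧ f.range.IsPure ∧
        ∃ x : ℕ → H,
          ∀ i : ℕ, ∑ j : Fin (E.len i), E.coeff i j • x (E.var i j) = f ⟨E.const i, hconst i⟩ := by
  classical
  choose sol hsol using hfs
  let X : ℕ → ℕ → G := fun m k => sol (Finset.range (k + 1)) m
  let x : ℕ → PureExtAux.UP G := fun m => PureExtAux.pr G (X m)
  let e : ↥G₀ →+ PureExtAux.UP G := (PureExtAux.diag G).comp G₀.subtype
  have heq : ∀ i, ∑ j : Fin (E.len i), E.coeff i j • x (E.var i j)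
      = PureExtAux.diag G (E.const i) := by
    intro i
    have hfun : (fun k => ∑ j : Fin (E.len i), E.coeff i j • X (E.var i j) k)
        = ∑ j : Fin (E.len i), E.coeff i j • X (E.var i j) := by
      funext k
      simp [Finset.sum_apply, Pi.smul_apply]
    have hL : ∑ j : Fin (E.len i), E.coeff i j • x (E.var i j)
        = PureExtAux.pr G (fun k => ∑ j : Fin (E.len i), E.coeff i j • X (E.var i j) k) := by
      rw [hfun, map_sum]
      simp only [map_zsmul]
      rfl
    have hmem : {k : ℕ | i ≤ k} ∈ (Filter.hyperfilter ℕ : Filter ℕ) := by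
      apply Filter.hyperfilter_le_cofinite
      rw [Filter.mem_cofinite]
      have hc : {k : ℕ | i ≤ k}ᶜ = {k | k < i} := by ext k; simp [not_le]
      rw [hc]
      exact Set.finite_lt_nat i
    have hev : ∀ᶠ k in (Filter.hyperfilter ℕ : Filter ℕ),
        ((fun k => ∑ j : Fin (E.len i), E.coeff i j • X (E.var i j) k)
          - Function.const ℕ (E.const i)) k = 0 := by
      filter_upwards [hmem] with k hk
      have hs := hsol (Finset.range (k + 1)) i (Finset.mem_range.mpr (Nat.lt_succ_of_le hk))
      show (∑ j : Fin (E.len i), E.coeff i j • X (E.var i j) k) - E.const i = 0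
      rw [sub_eq_zero]
      exact hs
    have h0 := (PureExtAux.pr_eq_zero G).mpr hev
    rw [map_sub, sub_eq_zero] at h0
    rw [hL, h0]
    rfl
  let T : Set (PureExtAux.UP G) := Set.range (fun g : ↥G₀ => e g) ∪ Set.range x
  let S : AddSubgroup (PureExtAux.UP G) := AddSubgroup.closure T
  let H' : AddSubgroup (PureExtAux.UP G) := PureExtAux.pureCl S
  have hxS : ∀ m, x m ∈ S := fun m => AddSubgroup.subset_closure (Or.inr ⟨m, rfl⟩)
  have heS : ∀ g : ↥G₀, e g ∈ S := fun g => AddSubgroup.subset_closure (Or.inl ⟨g, rfl⟩)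
  have hxH : ∀ m, x m ∈ H' := fun m => ⟨1, one_pos, by simpa using hxS m⟩
  have heH : ∀ g : ↥G₀, e g ∈ H' := fun g => ⟨1, one_pos, by simpa using heS g⟩
  let f : ↥G₀ →+ ↥H' := e.codRestrict H' heH
  refine ⟨↥H', inferInstance, PureExtAux.nzsd_subtype H', ?_, f, ?_, ?_,
    fun m => ⟨x m, hxH m⟩, ?_⟩
  · -- cardinality
    have h2 : #(↥(Set.range x)) ≤ Cardinal.aleph0 := by
      have : (Set.range x).Countable := Set.countable_range x
      have := this.to_subtype
      exact Cardinal.mk_le_aleph0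
    have hT : #(↥T) ≤ #(↥G₀) + Cardinal.aleph0 := by
      refine (Cardinal.mk_union_le _ _).trans ?_
      exact add_le_add Cardinal.mk_range_le h2
    have hS : #(↥S) ≤ #(↥G₀) + Cardinal.aleph0 :=
      (PureExtAux.mk_closure_le T).trans (max_le hT le_add_self)
    have haleph : Cardinal.aleph0 ≤ #(↥G₀) + Cardinal.aleph0 := le_add_self
    refine (PureExtAux.mk_pureCl_le S).trans ?_
    refine (mul_le_mul' haleph hS).trans ?_
    rw [Cardinal.mul_eq_self haleph]
  · -- injectivity
    intro a b hab
    have h1 : PureExtAux.diag G (↑a) = PureExtAux.diag G (↑b) := congrArg Subtype.val hab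
    exact Subtype.ext (PureExtAux.diag_inj G h1)
  · -- purity
    intro n h hmem hg
    obtain ⟨a, rfl⟩ := hmem
    obtain ⟨g, hg⟩ := hg
    rcases Nat.eq_zero_or_pos n with hn | hn
    · subst hn
      refine ⟨f a, ⟨a, rfl⟩, ?_⟩
      rw [← hg]
      simp
    · have hK : n • (g : PureExtAux.UP G) = PureExtAux.diag G (↑a) := by
        have h1 := congrArg Subtype.val hg
        have h2 : n • (g : PureExtAux.UP G) = ((f a : ↥H') : PureExtAux.UP G) := by simpa using h1
        exact h2
      obtain ⟨g', hg'⟩ := PureExtAux.pure_diag G (↑a) (g : PureExtAux.UP G) n hK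
      obtain ⟨a', ha'₀, ha'⟩ := hG₀ n (↑a) a.2 ⟨g', hg'⟩
      refine ⟨f ⟨a', ha'₀⟩, ⟨⟨a', ha'₀⟩, rfl⟩, ?_⟩
      rw [← map_nsmul]
      congr 1
      exact Subtype.ext (by simpa using ha')
  · -- the equations
    intro i
    apply Subtype.ext
    have h1 : H'.subtype (∑ j : Fin (E.len i),
          E.coeff i j • (⟨x (E.var i j), hxH (E.var i j)⟩ : ↥H'))
        = ∑ j : Fin (E.len i), E.coeff i j • x (E.var i j) := by
      rw [map_sum]
      exact Finset.sum_congr rfl fun j _ => map_zsmul H'.subtype _ _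
    exact h1.trans ((heq i).trans rfl)
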